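/- arXiv:2404.14733 — 2 statements merged into one kernel-verified Lean document; each statement's English description precedes it below -/
import Mathlib

section
/- Let q ∈ (0, 1/5) and x = q/(1−q), so that x ∈ (0, 1/4) and (1−2x)² > x. Then, with R(n) = 1 − h(x^n/(1+x^n)) − h(1/2 + (x^n + (1−2x)^n)/(2(1+x^n))), there exists N such that R(n) > 0 for all n ≥ N. -/
set_option maxHeartbeats 1000000


noncomputable def binEnt (p : ℝ) : ℝ :=
  -p * Real.logb 2 p - (1 - p) * Real.logb 2 (1 - p)

lemma sub_one_div_le_log {t : ℝ} (ht : 0 < t) : 1 - 1 / t ≤ Real.log t := by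
  have h := Real.log_le_sub_one_of_pos (show (0:ℝ) < 1 / t by positivity)
  rw [one_div, Real.log_inv] at h
  rw [one_div]
  linarith

lemma log_two_pos' : (0:ℝ) < Real.log 2 := Real.log_pos (by norm_num)

/-- Quantitative entropy gap near 1/2: for `0 ≤ ε ≤ 1/8`, `binEnt (1/2+ε) ≤ 1 - ε^2`. -/
lemma binEnt_half_add_le {ε : ℝ} (h0 : 0 ≤ ε) (h8 : ε ≤ 1 / 8) :
    binEnt (1 / 2 + ε) ≤ 1 - ε ^ 2 := by
  have l2 : (0:ℝ) < Real.log 2 := log_two_pos'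
  have hp1 : (0:ℝ) < 1 + 2 * ε := by linarith
  have hp2 : (0:ℝ) < 1 - 2 * ε := by linarith
  set A := Real.log (1 + 2 * ε) with hA
  set B := Real.log (1 - 2 * ε) with hB
  -- logs of the two arguments
  have e1 : Real.log (1 / 2 + ε) = A - Real.log 2 := by
    rw [show (1:ℝ) / 2 + ε = (1 + 2 * ε) / 2 by ring,
      Real.log_div (by linarith) (by norm_num)]
  have e2 : Real.log (1 - (1 / 2 + ε)) = B - Real.log 2 := by
    rw [show (1:ℝ) - (1 / 2 + ε) = (1 - 2 * ε) / 2 by ring,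
      Real.log_div (by linarith) (by norm_num)]
  -- term 1 : A + B = log (1 - 4 ε²) ≥ -(64/15) ε²
  have hAB : A + B = Real.log (1 - 4 * ε ^ 2) := by
    rw [hA, hB, ← Real.log_mul (by linarith) (by linarith)]
    ring_nf
  have hd : (15:ℝ) / 16 ≤ 1 - 4 * ε ^ 2 := by nlinarith
  have t1 : -(64 / 15) * ε ^ 2 ≤ A + B := by
    rw [hAB]
    have h := sub_one_div_le_log (show (0:ℝ) < 1 - 4 * ε ^ 2 by linarith)
    have hle : 1 / (1 - 4 * ε ^ 2) ≤ 1 + (64 / 15) * ε ^ 2 := by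
      rw [div_le_iff₀ (by linarith)]
      nlinarith
    linarith
  -- term 2 : A - B = log ((1+2ε)/(1-2ε)) ≥ (16/5) ε
  have t2 : (16 / 5) * ε ≤ A - B := by
    have h := sub_one_div_le_log (show (0:ℝ) < (1 + 2 * ε) / (1 - 2 * ε) by positivity)
    rw [Real.log_div (by linarith) (by linarith)] at h
    have hinv : 1 / ((1 + 2 * ε) / (1 - 2 * ε)) = (1 - 2 * ε) / (1 + 2 * ε) := by
      field_simp
    rw [hinv] at h
    have key : (1 - 2 * ε) / (1 + 2 * ε) ≤ 1 - 16 / 5 * ε := by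
      rw [div_le_iff₀ hp1]
      nlinarith
    linarith
  -- combine
  have key : ε ^ 2 * Real.log 2 ≤ (1 / 2 + ε) * A + (1 / 2 - ε) * B := by
    have hln2 : Real.log 2 ≤ 1 := by
      have := Real.log_le_sub_one_of_pos (show (0:ℝ) < 2 by norm_num)
      linarith
    have c1 : (1 / 2) * (-(64 / 15) * ε ^ 2) ≤ (1 / 2) * (A + B) := by linarith
    have c2 : ε * ((16 / 5) * ε) ≤ ε * (A - B) :=
      mul_le_mul_of_nonneg_left t2 h0
    nlinarith [sq_nonneg ε]
  -- unfold binEnt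
  unfold binEnt
  rw [Real.logb, Real.logb, e1]
  rw [show Real.log (1 - (1 / 2 + ε)) = B - Real.log 2 from e2]
  have expand : -(1 / 2 + ε) * ((A - Real.log 2) / Real.log 2) -
      (1 - (1 / 2 + ε)) * ((B - Real.log 2) / Real.log 2) =
      (Real.log 2 - ((1 / 2 + ε) * A + (1 / 2 - ε) * B)) / Real.log 2 := by
    field_simp
    ring
  rw [expand, div_le_iff₀ l2]
  nlinarith
  
/-- Upper bound for the entropy of a small probability. -/
lemma binEnt_le_of_small {p : ℝ} (h0 : 0 < p) (h1 : p < 1) :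
    binEnt p ≤ (-Real.log p * p + p) / Real.log 2 := by
  have l2 : (0:ℝ) < Real.log 2 := log_two_pos'
  have hq : (0:ℝ) < 1 - p := by linarith
  have h := sub_one_div_le_log hq
  have key : -(1 - p) * Real.log (1 - p) ≤ p := by
    have : 1 - 1 / (1 - p) = -p / (1 - p) := by field_simp; ring
    rw [this] at h
    have := mul_le_mul_of_nonneg_left h hq.le
    rw [mul_div_cancel₀ _ (ne_of_gt hq)] at this
    nlinarith
  unfold binEnt
  rw [Real.logb, Real.logb]
  have expand : -p * (Real.log p / Real.log 2) - (1 - p) * (Real.log (1 - p) / Real.log 2)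
      = (-p * Real.log p - (1 - p) * Real.log (1 - p)) / Real.log 2 := by ring
  rw [expand]
  gcongr
  nlinarith [key]

theorem bb84_threshold (q x : ℝ) (hq0 : 0 < q) (hq : q < 1 / 5)
    (hx : x = q / (1 - q)) :
    (0 < x ∧ x < 1 / 4) ∧ (1 - 2 * x) ^ 2 > x ∧
    ∃ N : ℕ, ∀ n ≥ N,
      0 < 1 - binEnt (x ^ n / (1 + x ^ n)) -
        binEnt (1 / 2 + (x ^ n + (1 - 2 * x) ^ n) / (2 * (1 + x ^ n))) := by
  have hq1 : (0:ℝ) < 1 - q := by linarith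
  have hx0 : 0 < x := by rw [hx]; positivity
  have hx4 : x < 1 / 4 := by
    rw [hx, div_lt_iff₀ hq1]; linarith
  have hb : (1 - 2 * x) ^ 2 > x := by nlinarith
  refine ⟨⟨hx0, hx4⟩, hb, ?_⟩
  have l2 : (0:ℝ) < Real.log 2 := log_two_pos'
  set y : ℝ := 1 - 2 * x with hy
  have hy0 : 0 < y := by rw [hy]; linarith
  have hy1 : y < 1 := by rw [hy]; linarith
  set b : ℝ := (1 - 2 * x) ^ 2 with hbdef
  have hb0 : 0 < b := by positivity
  have hxb : x / b < 1 := (div_lt_one hb0).2 hb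
  have hlogx : Real.log x < 0 := Real.log_neg hx0 (by linarith)
  set C : ℝ := (Real.log 2 + 1 - Real.log x) / Real.log 2 with hC
  have hC0 : 0 < C := by
    apply div_pos (by linarith) l2
  -- eventualities
  have hxlt1 : x < 1 := by linarith
  have ev1 : ∀ᶠ n : ℕ in Filter.atTop, x ^ n ≤ 1 / 8 :=
    (tendsto_pow_atTop_nhds_zero_of_lt_one hx0.le hxlt1).eventually_le_const (by norm_num)
  have ev2 : ∀ᶠ n : ℕ in Filter.atTop, y ^ n ≤ 1 / 8 :=
    (tendsto_pow_atTop_nhds_zero_of_lt_one hy0.le hy1).eventually_le_const (by norm_num)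
  have hsum : Filter.Tendsto (fun n : ℕ => (n : ℝ) ^ 1 * (x / b) ^ n)
      Filter.atTop (nhds 0) := by
    have : Summable (fun n : ℕ => (n : ℝ) ^ 1 * (x / b) ^ n) :=
      summable_pow_mul_geometric_of_norm_lt_one 1
        (by rw [Real.norm_eq_abs, abs_of_nonneg (by positivity)]; exact hxb)
    exact this.tendsto_atTop_zero
  have ev3 : ∀ᶠ n : ℕ in Filter.atTop, (n : ℝ) ^ 1 * (x / b) ^ n < 1 / (16 * C) :=
    hsum.eventually_lt_const (by positivity)
  obtain ⟨N, hN⟩ := Filter.eventually_atTop.1 (((ev1.and ev2).and ev3).and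
    (Filter.eventually_ge_atTop 1))
  refine ⟨N, fun n hn => ?_⟩
  obtain ⟨⟨⟨h18, h28⟩, h3⟩, hn1⟩ := hN n hn
  set s : ℝ := x ^ n with hs
  set t : ℝ := y ^ n with ht
  have hs0 : 0 < s := by positivity
  have ht0 : 0 < t := by positivity
  have hs1 : s < 1 := by linarith
  have ht1 : t < 1 := by linarith
  have hbn : b ^ n = t ^ 2 := by
    rw [hbdef, ht, hy, ← pow_mul, ← pow_mul, Nat.mul_comm]
  -- bound binEnt at small probability p = s/(1+s)
  set p : ℝ := s / (1 + s) with hp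
  have hp0 : 0 < p := by positivity
  have hp1 : p < 1 := by
    rw [hp, div_lt_one (by linarith)]; linarith
  have hps : p ≤ s := by
    rw [hp, div_le_iff₀ (by linarith)]; nlinarith
  have hplog : -Real.log p ≤ Real.log 2 - n * Real.log x := by
    have hlp : Real.log p = Real.log s - Real.log (1 + s) := by
      rw [hp, Real.log_div hs0.ne' (by linarith)]
    have hls : Real.log s = n * Real.log x := by rw [hs, Real.log_pow]
    have hup : Real.log (1 + s) ≤ Real.log 2 :=
      Real.log_le_log (by linarith) (by linarith)
    rw [hlp, hls]; linarith
  have hlogp_nonneg : 0 ≤ -Real.log p :=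
    neg_nonneg.2 (Real.log_nonpos hp0.le hp1.le)
  have bound1 : binEnt p ≤ (n : ℝ) * s * C := by
    refine (binEnt_le_of_small hp0 hp1).trans ?_
    have step1 : -Real.log p * p ≤ (Real.log 2 - n * Real.log x) * s :=
      mul_le_mul hplog hps hp0.le (by linarith)
    have hn1' : (1:ℝ) ≤ (n : ℝ) := by exact_mod_cast hn1
    have num : -Real.log p * p + p ≤ (n : ℝ) * s * (Real.log 2 + 1 - Real.log x) := by
      have hA : 0 ≤ ((n : ℝ) - 1) * s := mul_nonneg (by linarith) hs0.le
      nlinarith [mul_nonneg hA l2.le, mul_nonneg hA (show (0:ℝ) ≤ -Real.log x by linarith)]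
    calc (-Real.log p * p + p) / Real.log 2
        ≤ ((n : ℝ) * s * (Real.log 2 + 1 - Real.log x)) / Real.log 2 := by gcongr
      _ = (n : ℝ) * s * C := by rw [hC]; ring
  -- bound for the near-half entropy
  set ε : ℝ := (s + t) / (2 * (1 + s)) with hε
  have hε0 : 0 ≤ ε := by positivity
  have hε8 : ε ≤ 1 / 8 := by
    rw [hε, div_le_iff₀ (by linarith)]
    nlinarith
  have hεt : t / 4 ≤ ε := by
    rw [hε, div_le_div_iff₀ (by norm_num) (by linarith)]
    nlinarith
  have bound2 : binEnt (1 / 2 + ε) ≤ 1 - ε ^ 2 := binEnt_half_add_le hε0 hε8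
  -- key comparison : C n s < t²/16 ≤ ε²
  have key : (n : ℝ) * s * C < t ^ 2 / 16 := by
    have h3' : (n : ℝ) * (s / t ^ 2) < 1 / (16 * C) := by
      have hpow : (x / b) ^ n = s / t ^ 2 := by rw [hs, div_pow, hbn]
      simpa [hpow] using h3
    have h3'' : (n : ℝ) * (s / t ^ 2) * (16 * C) < 1 :=
      (lt_div_iff₀ (by positivity)).1 h3'
    have hst : s / t ^ 2 * t ^ 2 = s := div_mul_cancel₀ _ (by positivity)
    have ht2 : (0:ℝ) < t ^ 2 := by positivity
    nlinarith [mul_lt_mul_of_pos_right h3'' ht2]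
  have hε2 : t ^ 2 / 16 ≤ ε ^ 2 := by
    have := mul_le_mul hεt hεt (by positivity) hε0
    nlinarith
  have final : binEnt p < ε ^ 2 := lt_of_le_of_lt bound1 (lt_of_lt_of_le key hε2)
  linarith
end

section
/- Let q ∈ (0, (3−√5)/(5−√5)) and x = q/(1−q), so that (1−x)² > x. Then, with R(n) = 1 − h(x^n/(1+x^n)) − h(1/2 + (1−x)^n/(2(1+x^n))), there exists N such that R(n) > 0 for all n ≥ N. -/
lemma mul_log_ge (y : ℝ) (hy : 0 < y) : y - 1 ≤ y * Real.log y := by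
  have h := Real.log_le_sub_one_of_pos (inv_pos.2 hy)
  rw [Real.log_inv] at h
  have h2 := mul_le_mul_of_nonneg_left h hy.le
  have h3 : y * y⁻¹ = 1 := mul_inv_cancel₀ hy.ne'
  nlinarith

lemma mul_log_sub (c d : ℝ) (hc : 0 < c) (hd : 0 < d) :
    d - c ≤ d * (Real.log d - Real.log c) := by
  have h := mul_log_ge (d / c) (by positivity)
  rw [Real.log_div hd.ne' hc.ne'] at h
  have h2 := mul_le_mul_of_nonneg_left h hc.le
  have e : c * (d / c) = d := by field_simp
  calc d - c = c * (d / c - 1) := by field_simp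
    _ ≤ c * (d / c * (Real.log d - Real.log c)) := h2
    _ = d * (Real.log d - Real.log c) := by rw [← mul_assoc, e]

lemma S_ge (t : ℝ) (h0 : 0 ≤ t) (h1 : t ≤ 1 / 2) :
    t ^ 2 / 5 ≤ (1 + t) * Real.log (1 + t) + (1 - t) * Real.log (1 - t) := by
  have p1 : (0:ℝ) < 1 + t / 2 := by linarith
  have p2 : (0:ℝ) < 1 + t := by linarith
  have p3 : (0:ℝ) < 1 - t := by linarith
  have hP : 0 ≤ Real.log (1 + t / 2) := Real.log_nonneg (by linarith)
  have h1' : t / 2 ≤ (1 + t / 2) * Real.log (1 + t / 2) := by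
    have := mul_log_ge (1 + t / 2) p1; linarith
  have h2' : t / 2 ≤ (1 + t) * (Real.log (1 + t) - Real.log (1 + t / 2)) := by
    have := mul_log_sub (1 + t / 2) (1 + t) p1 p2; linarith
  have h3 : -t ≤ (1 - t) * Real.log (1 - t) := by
    have := mul_log_ge (1 - t) p3; linarith
  nlinarith [mul_le_mul_of_nonneg_left h1' h0,
    mul_nonneg h0 hP,
    mul_nonneg (mul_nonneg h0 h0) hP,
    mul_nonneg (by linarith : (0:ℝ) ≤ 1/2 - t) (mul_nonneg h0 hP)]

lemma binEnt_le (p : ℝ) (h0 : 0 < p) (h1 : p < 1) :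
    binEnt p ≤ (p - p * Real.log p) / Real.log 2 := by
  have hL : 0 < Real.log 2 := Real.log_pos one_lt_two
  have h3 := mul_log_ge (1 - p) (by linarith)
  have key : -p * Real.log p - (1 - p) * Real.log (1 - p) ≤ p - p * Real.log p := by linarith
  have e : binEnt p = (-p * Real.log p - (1 - p) * Real.log (1 - p)) / Real.log 2 := by
    unfold binEnt Real.logb; ring
  rw [e]
  exact div_le_div_of_nonneg_right key hL.le

lemma binEnt_half_add (δ : ℝ) (h0 : 0 ≤ δ) (h1 : δ ≤ 1 / 4) :
    binEnt (1 / 2 + δ) ≤ 1 - 4 * δ ^ 2 / (10 * Real.log 2) := by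
  have hL : 0 < Real.log 2 := Real.log_pos one_lt_two
  have p2 : (0:ℝ) < 1 + 2 * δ := by linarith
  have p3 : (0:ℝ) < 1 - 2 * δ := by linarith
  have l1 : Real.log (1 / 2 + δ) = Real.log (1 + 2 * δ) - Real.log 2 := by
    rw [show (1:ℝ) / 2 + δ = (1 + 2 * δ) / 2 by ring, Real.log_div p2.ne' two_ne_zero]
  have l2 : Real.log (1 - (1 / 2 + δ)) = Real.log (1 - 2 * δ) - Real.log 2 := by
    rw [show (1:ℝ) - (1 / 2 + δ) = (1 - 2 * δ) / 2 by ring, Real.log_div p3.ne' two_ne_zero]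
  have e : binEnt (1 / 2 + δ) =
      1 - ((1 + 2 * δ) * Real.log (1 + 2 * δ) + (1 - 2 * δ) * Real.log (1 - 2 * δ)) /
        (2 * Real.log 2) := by
    unfold binEnt Real.logb
    rw [l1, l2]
    field_simp
    ring
  rw [e]
  have hS := S_ge (2 * δ) (by linarith) (by linarith)
  have hdiv := div_le_div_of_nonneg_right hS (by positivity : (0:ℝ) ≤ 2 * Real.log 2)
  have e2 : (2 * δ) ^ 2 / 5 / (2 * Real.log 2) = 4 * δ ^ 2 / (10 * Real.log 2) := by
    field_simp; ring
  linarith [e2 ▸ hdiv]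

set_option maxHeartbeats 2000000 in
theorem six_state_threshold (q x : ℝ) (hq0 : 0 < q)
    (hq : q < (3 - Real.sqrt 5) / (5 - Real.sqrt 5))
    (hx : x = q / (1 - q)) :
    (1 - x) ^ 2 > x ∧
    ∃ N : ℕ, ∀ n ≥ N,
      0 < 1 - binEnt (x ^ n / (1 + x ^ n)) -
        binEnt (1 / 2 + (1 - x) ^ n / (2 * (1 + x ^ n))) := by
  have h5 : Real.sqrt 5 ^ 2 = 5 := Real.sq_sqrt (by norm_num)
  have h5n := Real.sqrt_nonneg 5
  have h5a : 2 < Real.sqrt 5 := by nlinarith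
  have h5b : Real.sqrt 5 < 3 := by nlinarith
  have h55 : (0:ℝ) < 5 - Real.sqrt 5 := by linarith
  have hq' : q * (5 - Real.sqrt 5) < 3 - Real.sqrt 5 := (lt_div_iff₀ h55).mp hq
  have hq2 : q < 1 / 2 := by
    nlinarith [mul_nonneg hq0.le (show (0:ℝ) ≤ 3 - Real.sqrt 5 by linarith)]
  have h1q : 0 < 1 - q := by linarith
  have hx0 : 0 < x := hx ▸ div_pos hq0 h1q
  have hxlt : x < (3 - Real.sqrt 5) / 2 := by
    rw [hx, div_lt_div_iff₀ h1q (by norm_num)]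
    nlinarith
  have hxhalf : x < 1 / 2 := by nlinarith
  have hx1 : x < 1 := by linarith
  have hkey : (1 - x) ^ 2 > x := by
    nlinarith [mul_pos (show (0:ℝ) < (3 - Real.sqrt 5) / 2 - x by linarith)
      (show (0:ℝ) < (3 + Real.sqrt 5) / 2 - x by nlinarith)]
  refine ⟨hkey, ?_⟩
  have hL : 0 < Real.log 2 := Real.log_pos one_lt_two
  set s := Real.sqrt ((1 - x) ^ 2 / x) with hs_def
  have hr : 1 < (1 - x) ^ 2 / x := (one_lt_div hx0).2 hkey
  have hs1 : 1 < s := by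
    rw [hs_def]
    exact (Real.lt_sqrt (by norm_num)).mpr (by nlinarith)
  have hs2 : s ^ 2 = (1 - x) ^ 2 / x := Real.sq_sqrt (by positivity)
  set C := 40 * (1 + Real.log 2) with hC_def
  set D := 40 * (-Real.log x) with hD_def
  have hC : 0 < C := by positivity
  have hD : 0 < D := by
    have := Real.log_neg hx0 hx1
    rw [hD_def]; linarith
  have hs0 : 0 < s - 1 := by linarith
  -- eventual facts
  have ev1 : ∀ᶠ n : ℕ in Filter.atTop, (1 - x) ^ n ≤ 1 / 2 := by
    have ht := tendsto_pow_atTop_nhds_zero_of_lt_one (by linarith : (0:ℝ) ≤ 1 - x)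
      (by linarith : 1 - x < 1)
    exact (ht.eventually_lt_const (by norm_num : (0:ℝ) < 1 / 2)).mono fun n h => h.le
  have ev2 : ∀ᶠ n : ℕ in Filter.atTop, (C + D) / (s - 1) ≤ s ^ n :=
    (tendsto_pow_atTop_atTop_of_one_lt hs1).eventually_ge_atTop _
  obtain ⟨N, hN⟩ := Filter.eventually_atTop.mp
    ((ev1.and ev2).and (Filter.eventually_ge_atTop 2))
  refine ⟨N, fun n hn => ?_⟩
  obtain ⟨⟨hb12, hsn⟩, hn2⟩ := hN n hn
  set a := x ^ n with ha_def
  set b := (1 - x) ^ n with hb_def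
  have ha0 : 0 < a := pow_pos hx0 n
  have ha1 : a ≤ 1 := pow_le_one₀ hx0.le hx1.le
  have hb0 : 0 < b := pow_pos (by linarith) n
  have hA : (0:ℝ) < 1 + a := by linarith
  have hε0 : 0 < a / (1 + a) := by positivity
  have hε1 : a / (1 + a) < 1 := by rw [div_lt_one hA]; linarith
  have hδ0 : (0:ℝ) ≤ b / (2 * (1 + a)) := by positivity
  have hδ1 : b / (2 * (1 + a)) ≤ 1 / 4 := by
    rw [div_le_iff₀ (by positivity)]; linarith
  have H1 := binEnt_le (a / (1 + a)) hε0 hε1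
  have H2 := binEnt_half_add (b / (2 * (1 + a))) hδ0 hδ1
  -- bound ε(1 - log ε) from above
  have l_eps_le : a / (1 + a) ≤ a := by
    rw [div_le_iff₀ hA]
    have h := mul_le_mul_of_nonneg_left (show (1:ℝ) ≤ 1 + a by linarith) ha0.le
    linarith
  have l_half : a / 2 ≤ a / (1 + a) := by
    rw [div_le_div_iff₀ (by norm_num) hA]
    have h := mul_le_mul_of_nonneg_left (show 1 + a ≤ 2 by linarith) ha0.le
    linarith
  have l_logeps : Real.log a - Real.log 2 ≤ Real.log (a / (1 + a)) := by
    calc Real.log a - Real.log 2 = Real.log (a / 2) :=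
          (Real.log_div ha0.ne' two_ne_zero).symm
      _ ≤ Real.log (a / (1 + a)) := Real.log_le_log (by positivity) l_half
  have l_loga : Real.log a = n * Real.log x := by rw [ha_def, Real.log_pow]
  have l_one_sub : 1 - Real.log (a / (1 + a)) ≤ (C + n * D) / 40 := by
    rw [hC_def, hD_def]
    have : 1 - Real.log (a / (1 + a)) ≤ 1 + Real.log 2 - Real.log a := by linarith
    rw [l_loga] at this
    calc 1 - Real.log (a / (1 + a)) ≤ 1 + Real.log 2 - n * Real.log x := this
      _ = (40 * (1 + Real.log 2) + n * (40 * (-Real.log x))) / 40 := by ring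
  have l_nonneg : 0 ≤ 1 - Real.log (a / (1 + a)) := by
    have := Real.log_nonpos hε0.le hε1.le
    linarith
  have l_prod : (a / (1 + a)) * (1 - Real.log (a / (1 + a))) ≤ a * ((C + n * D) / 40) :=
    mul_le_mul l_eps_le l_one_sub l_nonneg ha0.le
  -- bound δ² from below
  have l_delta : b / 4 ≤ b / (2 * (1 + a)) := by
    rw [div_le_div_iff₀ (by norm_num) (by positivity)]
    have h := mul_le_mul_of_nonneg_left (show 2 * (1 + a) ≤ 4 by linarith) hb0.le
    linarith
  have l_delta_sq : b ^ 2 / 16 ≤ (b / (2 * (1 + a))) ^ 2 := by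
    calc b ^ 2 / 16 = (b / 4) ^ 2 := by ring
      _ ≤ (b / (2 * (1 + a))) ^ 2 := by
          apply pow_le_pow_left₀ (by positivity) l_delta
  -- exponential beats linear
  have hba : b ^ 2 / a = ((1 - x) ^ 2 / x) ^ n := by
    rw [ha_def, hb_def, div_pow, ← pow_mul, ← pow_mul, mul_comm 2 n, pow_mul]
  have hrn : ((1 - x) ^ 2 / x) ^ n = s ^ n * s ^ n := by
    rw [← hs2, ← pow_mul, two_mul, pow_add]
  have hbern : (n:ℝ) * (s - 1) ≤ s ^ n := by
    have := one_add_mul_le_pow (by linarith : (-2:ℝ) ≤ s - 1) n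
    rw [show (1:ℝ) + (s - 1) = s by ring] at this
    linarith
  have e2 : (n:ℝ) * (C + D) ≤ s ^ n * s ^ n := by
    calc (n:ℝ) * (C + D) = ((C + D) / (s - 1)) * ((n:ℝ) * (s - 1)) := by
          field_simp
      _ ≤ s ^ n * s ^ n :=
          mul_le_mul hsn hbern (by positivity)
            (le_trans (by positivity) hsn)
  have hn2' : (2:ℝ) ≤ n := by exact_mod_cast hn2
  have hfinal : C + n * D < b ^ 2 / a := by
    rw [hba, hrn]
    have h := mul_le_mul_of_nonneg_left hn2' hC.le
    have hnD := mul_le_mul_of_nonneg_right (le_refl (n:ℝ)) hD.le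
    have hexp : (n:ℝ) * (C + D) = (n:ℝ) * C + (n:ℝ) * D := by ring
    linarith [e2]
  have hfinal' : a * ((C + n * D) / 40) < b ^ 2 / 40 := by
    rw [lt_div_iff₀ ha0] at hfinal
    linarith
  -- combine
  have hA1 : binEnt (a / (1 + a)) ≤ (a * ((C + n * D) / 40)) / Real.log 2 := by
    refine H1.trans (div_le_div_of_nonneg_right ?_ hL.le)
    linarith [l_prod]
  have hA3 : (a * ((C + n * D) / 40)) / Real.log 2 < (b ^ 2 / 40) / Real.log 2 := by
    gcongr
  have hA2 : binEnt (1 / 2 + b / (2 * (1 + a))) ≤ 1 - (b ^ 2 / 40) / Real.log 2 := by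
    refine H2.trans ?_
    have hcmp : (b ^ 2 / 40) / Real.log 2 ≤ 4 * (b / (2 * (1 + a))) ^ 2 / (10 * Real.log 2) := by
      rw [div_le_div_iff₀ (by positivity) (by positivity)]
      have h := mul_le_mul_of_nonneg_right l_delta_sq hL.le
      linarith
    linarith
  linarith [hA1, hA2, hA3]
end
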